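/- Let β* ∈ (0,1), γ* > 0 with γ*β* < 1, let b > 0 (standing for f(β*)) and c > 0 (standing for f(γ*)), α ∈ (0,1), and set l = c·(1−γ*β*)/(γ*·(1+β*)) (leader utility) and φ = b·(1−γ*β*)/(β*·(1+γ*)) (follower utility before sensing cost). Then following is better than leading, i.e. (1−α)·φ > l, if and only if α < (b − c + b/β* − c/γ*)/(b·(1+β*)/β*). -/

import Mathlib

/-- Following is better than leading, `(1−α)·φ > l`, iff
`α < (b − c + b/β* − c/γ*)/(b·(1+β*)/β*)`. -/
theorem stmt2 (β γ b c α : ℝ) (hβ0 : 0 < β) (hβ1 : β < 1) (hγ : 0 < γ)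
    (hγβ : γ * β < 1) (hb : 0 < b) (hc : 0 < c) (hα0 : 0 < α) (hα1 : α < 1)
    (l φ : ℝ) (hl : l = c * (1 - γ * β) / (γ * (1 + β)))
    (hφ : φ = b * (1 - γ * β) / (β * (1 + γ))) :
    (1 - α) * φ > l ↔ α < (b - c + b / β - c / γ) / (b * (1 + β) / β) := by
  subst hl hφ
  have h1 : (0:ℝ) < 1 - γ * β := by linarith
  have h2 : (0:ℝ) < 1 + β := by linarith
  have h3 : (0:ℝ) < 1 + γ := by linarith
  rw [gt_iff_lt, show (1 - α) * (b * (1 - γ * β) / (β * (1 + γ)))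
      = ((1 - α) * (b * (1 - γ * β))) / (β * (1 + γ)) from by ring,
    div_lt_div_iff₀ (by positivity) (by positivity),
    lt_div_iff₀ (by positivity : (0:ℝ) < b * (1 + β) / β),
    show α * (b * (1 + β) / β) = α * b * (1 + β) / β from by ring,
    div_lt_iff₀ hβ0, show b - c + b / β - c / γ
      = (b * β * γ - c * β * γ + b * γ - c * β) / (β * γ) from by
        field_simp,
    div_mul_eq_mul_div, lt_div_iff₀ (mul_pos hβ0 hγ)]
  constructor <;> intro h <;> nlinarith [mul_pos hβ0 hγ, mul_pos hb h1,
    mul_pos (mul_pos hb h1) (mul_pos hβ0 hγ)]
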